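/- (Low-rank approximation with insufficient channels) Let X ∈ ℝ^{n×p} and suppose rank H_{d|p}(X) = r. Let Φ ∈ ℝ^{n×n} be orthonormal. Then for any m with r ≤ m < pd there exist Ψ ∈ ℝ^{pd×2m} and Ψ̃ ∈ ℝ^{pd×2m} such that X = H_{d|p}^†( Φ ρ(Φᵀ H_{d|p}(X) Ψ) Ψ̃ᵀ ). -/

import Mathlib

open Matrix BigOperators Finset

noncomputable section

/-- Zero-padding of a length-`d` filter to a signal on `ZMod n`. -/
def zpad {n d : ℕ} [NeZero n] (ψ : Fin d → ℝ) : ZMod n → ℝ :=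
  fun k => if h : (ZMod.val k) < d then ψ ⟨ZMod.val k, h⟩ else 0

/-- Circular convolution of two signals on `ZMod n`. -/
def cconv {n : ℕ} [NeZero n] (f g : ZMod n → ℝ) : ZMod n → ℝ :=
  fun k => ∑ l : ZMod n, f l * g (k - l)

/-- Index flip of a signal on `ZMod n`. -/
def cflip {n : ℕ} (g : ZMod n → ℝ) : ZMod n → ℝ := fun k => g (-k)

/-- Wrap-around Hankel matrix `H_d(f)` of `f : ZMod n → ℝ`. -/
def hankel {n : ℕ} (d : ℕ) (f : ZMod n → ℝ) : Matrix (ZMod n) (Fin d) ℝ :=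
  Matrix.of fun i j => f (i + ((j : ℕ) : ZMod n))

/-- Frobenius (trace) inner product of two matrices. -/
def frobInner {I J : Type*} [Fintype I] [Fintype J] (A B : Matrix I J ℝ) : ℝ :=
  ∑ i, ∑ j, A i j * B i j

/-- Orthonormal Hankel basis element `E_k = (1/√d) H_d(e_k)`. -/
def hankE {n : ℕ} [NeZero n] (d : ℕ) (k : ZMod n) : Matrix (ZMod n) (Fin d) ℝ :=
  (Real.sqrt d)⁻¹ • hankel d (Pi.single k 1)

/-- Generalized (left) inverse of the Hankel lifting. -/
def hdag {n d : ℕ} [NeZero n] (B : Matrix (ZMod n) (Fin d) ℝ) : ZMod n → ℝ :=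
  fun k => (Real.sqrt d)⁻¹ * frobInner (hankE d k) B

/-- Extended Hankel matrix `H_{d|p}(Z)` of a `p`-channel signal. -/
def hankelExt {n : ℕ} (d p : ℕ) (Z : Matrix (ZMod n) (Fin p) ℝ) :
    Matrix (ZMod n) (Fin p × Fin d) ℝ :=
  Matrix.of fun i cj => Z (i + ((cj.2 : ℕ) : ZMod n)) cj.1

/-- Generalized (left) inverse of the extended Hankel lifting. -/
def hdagExt {n d p : ℕ} [NeZero n] (Y : Matrix (ZMod n) (Fin p × Fin d) ℝ) :
    Matrix (ZMod n) (Fin p) ℝ :=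
  Matrix.of fun k c => hdag (Matrix.of fun i j => Y i (c, j)) k

/-- Entrywise ReLU on matrices. -/
def reluM {I J : Type*} (A : Matrix I J ℝ) : Matrix I J ℝ :=
  Matrix.of fun i j => max 0 (A i j)


private lemma aux_sum_dite {M : Type*} [AddCommMonoid M] {r m : ℕ} (h : r ≤ m) (F : Fin r → M) :
    ∑ j : Fin m, (if h' : (j : ℕ) < r then F ⟨(j : ℕ), h'⟩ else 0) = ∑ i : Fin r, F i := by
  rw [Fin.sum_univ_eq_sum_range (fun j => if h' : j < r then F ⟨j, h'⟩ else 0) m]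
  rw [← Finset.sum_subset (Finset.range_subset_range.mpr h)
      (fun x _ hx => dif_neg (by simpa using hx))]
  rw [← Fin.sum_univ_eq_sum_range (fun j => if h' : j < r then F ⟨j, h'⟩ else 0) r]
  exact Finset.sum_congr rfl fun j _ => dif_pos j.isLt

private lemma aux_sum_two_mul {M : Type*} [AddCommMonoid M] {m : ℕ} (f : Fin (2 * m) → M) :
    ∑ j, f j = ∑ t : Fin m,
      (f ⟨(t : ℕ), by have := t.isLt; omega⟩ + f ⟨m + (t : ℕ), by have := t.isLt; omega⟩) := by
  have h0 : ∑ j, f j = ∑ j ∈ Finset.range (2 * m),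
      (fun t => if h : t < 2 * m then f ⟨t, h⟩ else 0) j := by
    rw [← Fin.sum_univ_eq_sum_range]
    refine Finset.sum_congr rfl fun j _ => ?_
    rw [dif_pos j.isLt]
  rw [h0, Finset.range_eq_Ico,
    ← Finset.sum_Ico_consecutive _ (Nat.zero_le m) (by omega : m ≤ 2 * m)]
  have hsec : ∑ i ∈ Finset.Ico m (2 * m), (fun t => if h : t < 2 * m then f ⟨t, h⟩ else 0) i
      = ∑ i ∈ Finset.range m, (fun t => if h : t < 2 * m then f ⟨t, h⟩ else 0) (m + i) := by
    rw [Finset.sum_Ico_eq_sum_range]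
    have h3 : 2 * m - m = m := by omega
    rw [h3]
  rw [hsec, ← Finset.range_eq_Ico, ← Finset.sum_add_distrib]
  rw [← Fin.sum_univ_eq_sum_range
    (fun t => (if h : t < 2*m then f ⟨t, h⟩ else 0) + (if h : m + t < 2*m then f ⟨m + t, h⟩ else 0)) m]
  refine Finset.sum_congr rfl fun t _ => ?_
  have h1 : (t : ℕ) < 2 * m := by have := t.isLt; omega
  have h2 : m + (t : ℕ) < 2 * m := by have := t.isLt; omega
  simp only [dif_pos h1, dif_pos h2]

set_option maxHeartbeats 800000 in
private lemma exists_proj_family {ι : Type*} [Fintype ι] {m : ℕ}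
    (V : Submodule ℝ (ι → ℝ)) (hm : Module.finrank ℝ V ≤ m) :
    ∃ c : Fin m → (ι → ℝ),
      ∀ v ∈ V, ∀ x, ∑ j : Fin m, (∑ y, v y * c j y) * c j x = v x := by
  classical
  let e' : EuclideanSpace ℝ ι ≃ₗ[ℝ] (ι → ℝ) := WithLp.linearEquiv 2 ℝ (ι → ℝ)
  let W : Submodule ℝ (EuclideanSpace ℝ ι) := V.map (e'.symm : (ι → ℝ) →ₗ[ℝ] EuclideanSpace ℝ ι)
  have hWm : Module.finrank ℝ W ≤ m := by
    rw [LinearEquiv.finrank_map_eq]; exact hm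
  let b := stdOrthonormalBasis ℝ W
  refine ⟨fun j => if h : (j : ℕ) < Module.finrank ℝ W
      then e' ((b ⟨(j : ℕ), h⟩ : W) : EuclideanSpace ℝ ι) else 0, ?_⟩
  intro v hv x
  have hvW : e'.symm v ∈ W := Submodule.mem_map_of_mem hv
  set w : W := ⟨e'.symm v, hvW⟩ with hw
  have h1 := b.sum_repr w
  have h2 : (∑ i, b.repr w i • ((b i : W) : EuclideanSpace ℝ ι)) = e'.symm v := by
    have := congrArg (Subtype.val) h1
    simpa using this
  have h3 : ∀ y, (∑ i, b.repr w i * ((e' ((b i : W) : EuclideanSpace ℝ ι)) y)) = v y := by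
    intro y
    have h2' : (∑ i, b.repr w i • e' ((b i : W) : EuclideanSpace ℝ ι)) = v := by
      have := congrArg e' h2
      rw [map_sum] at this
      simp only [_root_.map_smul] at this
      simpa using this
    have := congrFun h2' y
    simpa [Finset.sum_apply] using this
  have hinner : ∀ i, (∑ y, v y * (e' ((b i : W) : EuclideanSpace ℝ ι)) y) = b.repr w i := by
    intro i
    rw [OrthonormalBasis.repr_apply_apply]
    rw [Submodule.coe_inner, PiLp.inner_apply]
    simp only [RCLike.inner_apply, conj_trivial]
    exact Finset.sum_congr rfl fun y _ => rfl
  have hsplit : ∀ j : Fin m,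
      (∑ y, v y * (if h : (j : ℕ) < Module.finrank ℝ W
          then e' ((b ⟨(j : ℕ), h⟩ : W) : EuclideanSpace ℝ ι) else 0) y) *
        (if h : (j : ℕ) < Module.finrank ℝ W
          then e' ((b ⟨(j : ℕ), h⟩ : W) : EuclideanSpace ℝ ι) else 0) x
      = if h : (j : ℕ) < Module.finrank ℝ W
          then (∑ y, v y * (e' ((b ⟨(j : ℕ), h⟩ : W) : EuclideanSpace ℝ ι)) y) *
            (e' ((b ⟨(j : ℕ), h⟩ : W) : EuclideanSpace ℝ ι)) x
          else 0 := by
    intro j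
    by_cases h : (j : ℕ) < Module.finrank ℝ W
    · simp only [dif_pos h]
    · simp [dif_neg h]
  rw [Finset.sum_congr rfl fun j _ => hsplit j,
    aux_sum_dite hWm (fun i => (∑ y, v y * (e' ((b i : W) : EuclideanSpace ℝ ι)) y) *
      (e' ((b i : W) : EuclideanSpace ℝ ι)) x)]
  simp_rw [hinner]
  exact h3 x
private def psiOf {ι : Type*} {m : ℕ} (c : Fin m → ι → ℝ) : Matrix ι (Fin (2 * m)) ℝ :=
  Matrix.of fun x j =>
    if h : (j : ℕ) < m then c ⟨(j : ℕ), h⟩ x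
    else - c ⟨(j : ℕ) - m, by have := j.isLt; omega⟩ x

private lemma psiOf_fst {ι : Type*} {m : ℕ} (c : Fin m → ι → ℝ) (y : ι) (t : Fin m) :
    psiOf c y ⟨(t : ℕ), by have := t.isLt; omega⟩ = c t y := by
  simp only [psiOf, Matrix.of_apply]
  rw [dif_pos t.isLt]

private lemma psiOf_snd {ι : Type*} {m : ℕ} (c : Fin m → ι → ℝ) (y : ι) (t : Fin m) :
    psiOf c y ⟨m + (t : ℕ), by have := t.isLt; omega⟩ = - c t y := by
  simp only [psiOf, Matrix.of_apply]
  rw [dif_neg (by omega : ¬ m + (t : ℕ) < m)]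
  have : (⟨m + (t : ℕ) - m, by have := t.isLt; omega⟩ : Fin m) = t := Fin.ext (by simp)
  rw [this]

private lemma relu_mul_psi {ι K : Type*} [Fintype ι] [Fintype K] {m : ℕ}
    (c : Fin m → ι → ℝ) (N : Matrix K ι ℝ) :
    reluM (N * psiOf c) * (psiOf c)ᵀ
      = N * Matrix.of (fun y x => ∑ j : Fin m, c j y * c j x) := by
  ext k x
  rw [Matrix.mul_apply]
  rw [aux_sum_two_mul (fun j => reluM (N * psiOf c) k j * (psiOf c)ᵀ j x)]
  have hterm : ∀ t : Fin m,
      reluM (N * psiOf c) k ⟨(t : ℕ), by have := t.isLt; omega⟩ *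
          (psiOf c)ᵀ ⟨(t : ℕ), by have := t.isLt; omega⟩ x +
        reluM (N * psiOf c) k ⟨m + (t : ℕ), by have := t.isLt; omega⟩ *
          (psiOf c)ᵀ ⟨m + (t : ℕ), by have := t.isLt; omega⟩ x
      = (∑ y, N k y * c t y) * c t x := by
    intro t
    have h1 : (N * psiOf c) k ⟨(t : ℕ), by have := t.isLt; omega⟩ = ∑ y, N k y * c t y := by
      rw [Matrix.mul_apply]
      exact Finset.sum_congr rfl fun y _ => by rw [psiOf_fst]
    have h2 : (N * psiOf c) k ⟨m + (t : ℕ), by have := t.isLt; omega⟩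
        = - ∑ y, N k y * c t y := by
      rw [Matrix.mul_apply, ← Finset.sum_neg_distrib]
      exact Finset.sum_congr rfl fun y _ => by rw [psiOf_snd]; ring
    simp only [reluM, Matrix.of_apply, Matrix.transpose_apply, h1, h2, psiOf_fst, psiOf_snd]
    have hid := max_zero_sub_max_neg_zero_eq_self (∑ y, N k y * c t y)
    have h3 : (0 ⊔ ∑ y, N k y * c t y) - (0 ⊔ -∑ y, N k y * c t y) = ∑ y, N k y * c t y := by
      rw [sup_comm 0 (∑ y, N k y * c t y), sup_comm 0 (-∑ y, N k y * c t y)]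
      exact hid
    calc (0 ⊔ ∑ y, N k y * c t y) * c t x + (0 ⊔ -∑ y, N k y * c t y) * -c t x
        = ((0 ⊔ ∑ y, N k y * c t y) - (0 ⊔ -∑ y, N k y * c t y)) * c t x := by ring
      _ = (∑ y, N k y * c t y) * c t x := by rw [h3]
  rw [Finset.sum_congr rfl fun t _ => hterm t, Matrix.mul_apply]
  simp only [Matrix.of_apply, Finset.sum_mul, Finset.mul_sum]
  rw [Finset.sum_comm]
  exact Finset.sum_congr rfl fun y _ => Finset.sum_congr rfl fun t _ => by ring

private lemma hdagExt_hankelExt {n d p : ℕ} [NeZero n] (hd : 0 < d)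
    (X : Matrix (ZMod n) (Fin p) ℝ) : hdagExt (hankelExt d p X) = X := by
  ext k c
  simp only [hdagExt, hdag, frobInner, hankE, hankelExt, hankel, Matrix.of_apply,
    Matrix.smul_apply, smul_eq_mul]
  have key : ∀ jv : ZMod n,
      ∑ i : ZMod n, (Pi.single k (1 : ℝ) : ZMod n → ℝ) (i + jv) * X (i + jv) c = X k c := by
    intro jv
    rw [Fintype.sum_equiv (Equiv.addRight jv)
      (fun i => (Pi.single k (1 : ℝ) : ZMod n → ℝ) (i + jv) * X (i + jv) c)
      (fun i => (Pi.single k (1 : ℝ) : ZMod n → ℝ) i * X i c) (fun i => rfl)]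
    simp [Pi.single_apply]
  have h2 : ∑ i : ZMod n, ∑ j : Fin d,
      ((Real.sqrt d)⁻¹ * (Pi.single k (1 : ℝ) : ZMod n → ℝ) (i + ((j : ℕ) : ZMod n))) *
        X (i + ((j : ℕ) : ZMod n)) c
      = (Real.sqrt d)⁻¹ * (d * X k c) := by
    rw [Finset.sum_comm]
    have hj : ∀ j : Fin d, ∑ i : ZMod n,
        ((Real.sqrt d)⁻¹ * (Pi.single k (1 : ℝ) : ZMod n → ℝ) (i + ((j : ℕ) : ZMod n))) *
          X (i + ((j : ℕ) : ZMod n)) c = (Real.sqrt d)⁻¹ * X k c := by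
      intro j
      simp_rw [mul_assoc, ← Finset.mul_sum]
      rw [key (((j : ℕ) : ZMod n))]
    rw [Finset.sum_congr rfl fun j _ => hj j]
    simp [Finset.sum_const, Finset.card_univ]
    ring
  rw [h2, ← mul_assoc, ← mul_inv, Real.mul_self_sqrt (Nat.cast_nonneg d)]
  rw [inv_mul_cancel_left₀ (by exact_mod_cast hd.ne' : (d : ℝ) ≠ 0)]

/-- low-rank approximation with insufficient channels: if
`rank H_{d|p}(X) = r`, `Φ` orthonormal, and `r ≤ m < pd`, then there exist
`Ψ, Ψ̃ ∈ ℝ^{pd×2m}` with `X = H_{d|p}^†(Φ ρ(Φᵀ H_{d|p}(X) Ψ) Ψ̃ᵀ)`. -/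
theorem lowrank_approx_insufficient_channels {n d p m r : ℕ} [NeZero n] (hd : 0 < d)
    (X : Matrix (ZMod n) (Fin p) ℝ) (hr : (hankelExt d p X).rank = r)
    (Phi : Matrix (ZMod n) (ZMod n) ℝ) (hPhi : Phi * Phiᵀ = 1)
    (hrm : r ≤ m) (hmpd : m < p * d) :
    ∃ Psi Psit : Matrix (Fin p × Fin d) (Fin (2 * m)) ℝ,
      X = hdagExt (Phi * reluM (Phiᵀ * hankelExt d p X * Psi) * Psitᵀ) := by
  classical
  have hfin : Module.finrank ℝ
      (Submodule.span ℝ (Set.range (hankelExt d p X))) ≤ m := by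
    have h := Matrix.rank_eq_finrank_span_row (hankelExt d p X); rw [hr] at h; exact h.symm.le.trans hrm
  obtain ⟨c, hc⟩ := exists_proj_family (Submodule.span ℝ (Set.range (hankelExt d p X))) hfin
  refine ⟨psiOf c, psiOf c, ?_⟩
  have hP : hankelExt d p X * Matrix.of (fun y x => ∑ j : Fin m, c j y * c j x)
      = hankelExt d p X := by
    ext k x
    rw [Matrix.mul_apply]
    have hrow := hc (hankelExt d p X k)
      (Submodule.subset_span (Set.mem_range_self k)) x
    calc ∑ y, hankelExt d p X k y * Matrix.of (fun y x => ∑ j : Fin m, c j y * c j x) y x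
        = ∑ j : Fin m, (∑ y, hankelExt d p X k y * c j y) * c j x := by
          simp only [Matrix.of_apply, Finset.mul_sum, Finset.sum_mul]
          rw [Finset.sum_comm]
          exact Finset.sum_congr rfl fun j _ => Finset.sum_congr rfl fun y _ => by ring
      _ = hankelExt d p X k x := hrow
  have hmain : Phi * reluM (Phiᵀ * hankelExt d p X * psiOf c) * (psiOf c)ᵀ
      = hankelExt d p X := by
    calc Phi * reluM (Phiᵀ * hankelExt d p X * psiOf c) * (psiOf c)ᵀ
        = Phi * (reluM ((Phiᵀ * hankelExt d p X) * psiOf c) * (psiOf c)ᵀ) := by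
          rw [Matrix.mul_assoc]
      _ = Phi * ((Phiᵀ * hankelExt d p X) *
            Matrix.of (fun y x => ∑ j : Fin m, c j y * c j x)) := by
          rw [relu_mul_psi]
      _ = (Phi * Phiᵀ) * (hankelExt d p X *
            Matrix.of (fun y x => ∑ j : Fin m, c j y * c j x)) := by
          rw [Matrix.mul_assoc Phiᵀ, ← Matrix.mul_assoc Phi]
      _ = hankelExt d p X := by rw [hPhi, hP, Matrix.one_mul]
  rw [hmain, hdagExt_hankelExt hd X]
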